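/- Let $X$ be any $(4N+1) \times (4N+1)$ real positive semidefinite matrix with $X_{00} = 1$, $X_{ii} = X_{0i}$ for $i \in [4N]$, and $X_{ij} = 0$ whenever $i$ and $j$ are adjacent in $Ci_{4N}(1, 2N)$. Then $\sum_{i=1}^{4N} X_{ii} \leq N(1 + \cos(\pi/(2N)))$. -/

import Mathlib

open Finset Real RealInnerProductSpace

variable {H : Type*} [NormedAddCommGroup H] [InnerProductSpace ℝ H]

lemma coef_sum (M : ℕ) (P Q a : ℕ → ℝ) (k : ℝ)
    (hPQ : ∀ j, j < M → P (j+1) + Q j = k)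
    (hP0 : P 0 = k + 1/2) (hQM : Q M = k + 1/2) :
    (∑ j ∈ Finset.range (M+1), P j * a j) + (∑ j ∈ Finset.range (M+1), Q j * a (j+1))
    = k * (∑ i ∈ Finset.range (M+2), a i) + (1/2)*a 0 + (1/2)*a (M+1) := by
  rw [Finset.sum_range_succ' (fun j => P j * a j) M,
      Finset.sum_range_succ (fun j => Q j * a (j+1)) M]
  have hmid : (∑ j ∈ Finset.range M, P (j+1) * a (j+1)) + ∑ j ∈ Finset.range M, Q j * a (j+1)
      = k * ∑ j ∈ Finset.range M, a (j+1) := by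
    rw [← Finset.sum_add_distrib, Finset.mul_sum]
    refine Finset.sum_congr rfl fun j hj => ?_
    rw [← add_mul, hPQ j (Finset.mem_range.mp hj)]
  have hfull : ∑ i ∈ Finset.range (M+2), a i = a 0 + (∑ j ∈ Finset.range M, a (j+1)) + a (M+1) := by
    rw [show M+2 = (M+1)+1 by ring, Finset.sum_range_succ a (M+1), Finset.sum_range_succ' a M]
    ring
  rw [hP0, hQM]
  linear_combination hmid - k * hfull

set_option maxHeartbeats 2000000 in
lemma dpart (N : ℕ) (hN : 2 ≤ N) (D : ℕ → H) :
    0 ≤ Real.cos (π/(2*N)) * (∑ i ∈ range (2*N), ⟪D i, D i⟫)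
      + (∑ j ∈ range (2*N-1), ⟪D j, D (j+1)⟫) - ⟪D (2*N-1), D 0⟫ := by
  have hNR : (0:ℝ) < (N:ℝ) := by exact_mod_cast (by omega : 0 < N)
  set θ : ℝ := π/(2*N) with hθ
  have hθpos : 0 < θ := by rw [hθ]; positivity
  set k : ℝ := Real.cos θ with hk
  set m : ℕ := 2*N - 1 with hmdef
  have hm1 : m + 1 = 2*N := by omega
  set A : ℕ → ℝ := fun j => (2*(j:ℝ)+1)*θ/2 with hA
  set s : ℕ → ℝ := fun j => Real.sin (A j) with hs
  set c : ℕ → ℝ := fun j => Real.cos (A j) with hc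
  clear_value θ k m A s c
  have hA1 : ∀ j : ℕ, A (j+1) = A j + θ := by
    intro j; simp only [hA]; push_cast; ring
  have hA0 : A 0 = θ/2 := by simp only [hA]; push_cast; ring
  have h4Nθ : (4*(N:ℝ)) * θ / 2 = π := by
    rw [hθ]; field_simp; ring
  have hspos : ∀ j, j < 2*N → 0 < s j := by
    intro j hj
    have hApos : 0 < A j := by
      simp only [hA]; have : (0:ℝ) ≤ (j:ℝ) := Nat.cast_nonneg j; positivity
    have hAlt : A j < π := by
      have hcast : (2*(j:ℝ)+1) < 4*(N:ℝ) := by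
        have : 2*j+1 < 4*N := by omega
        exact_mod_cast this
      calc A j = (2*(j:ℝ)+1)*θ/2 := by rw [hA]
        _ < (4*(N:ℝ))*θ/2 := by nlinarith
        _ = π := h4Nθ
    rw [hs]
    exact Real.sin_pos_of_pos_of_lt_pi hApos hAlt
  have hs0 : 0 < s 0 := hspos 0 (by omega)
  have hsinθ : 0 < Real.sin θ := by
    apply Real.sin_pos_of_pos_of_lt_pi hθpos
    rw [hθ]
    exact div_lt_self Real.pi_pos (by exact_mod_cast (by omega : (1:ℕ) < 2*N))
  -- recurrence
  have hrec : ∀ j : ℕ, s (j+2) + s j = 2*k*s (j+1) := by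
    intro j
    have e2 : A (j+2) = A (j+1) + θ := hA1 (j+1)
    have e0 : A j = A (j+1) - θ := by rw [hA1 j]; ring
    simp only [hs, e2, e0, Real.sin_add, Real.sin_sub, hk]
    ring
  -- s 1 = (2k+1) s 0
  have hsin2 : Real.sin θ = 2 * s 0 * c 0 := by
    have h := Real.sin_two_mul (θ/2)
    have h2 : 2*(θ/2) = θ := by ring
    rw [h2] at h
    simp only [hs, hc, hA0]
    linarith [h]
  have hcos2 : Real.cos θ = 2 * c 0 ^ 2 - 1 := by
    have h := Real.cos_two_mul (θ/2)
    have h2 : 2*(θ/2) = θ := by ring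
    rw [h2] at h
    simp only [hc, hA0]
    linarith [h]
  have hs1 : s 1 = (2*k+1) * s 0 := by
    have h1 : A 1 = θ/2 + θ := by rw [hA1 0, hA0]
    have hpy := Real.sin_sq_add_cos_sq (θ/2)
    simp only [hs, h1, Real.sin_add, hk]
    simp only [hs, hc, hA0] at hsin2 hcos2 ⊢
    rw [hsin2, hcos2]
    nlinarith [hpy]
  have hmcast : ((m:ℝ)) = 2*(N:ℝ) - 1 := by
    rw [hmdef]; push_cast [Nat.cast_sub (by omega : 1 ≤ 2*N)]; ring
  have hAm : A m = π - θ/2 := by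
    simp only [hA, hmcast]
    rw [hθ]; field_simp; ring
  have hsm : s m = s 0 := by
    simp only [hs, hAm, hA0, Real.sin_pi_sub]
  have hcm : c m = -c 0 := by
    simp only [hc, hAm, hA0, Real.cos_pi_sub]
  have hm1cast : ((m-1:ℕ):ℝ) = 2*(N:ℝ) - 2 := by
    push_cast [Nat.cast_sub (by omega : 1 ≤ m), hmcast]; ring
  have hAm1 : A (m-1) = π - (θ/2 + θ) := by
    simp only [hA, hm1cast]
    rw [hθ]; field_simp; ring
  have hsm1 : s (m-1) = s 1 := by
    have h1 : A 1 = θ/2 + θ := by rw [hA1 0, hA0]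
    simp only [hs, hAm1, h1, Real.sin_pi_sub]
  -- definitions
  set Sv : ℕ → H := fun j => D j + (s j / s (j+1)) • D (j+1) with hSv
  set t : ℕ → ℝ := fun j => s (j+1)/(2*s j) with ht
  set lam : ℕ → ℝ := fun j => (-1:ℝ)^j * (s 0 / s j) with hlam
  clear_value Sv t lam
  have htpos : ∀ j, j < m → 0 < t j := by
    intro j hj
    have h1 := hspos j (by omega)
    have h2 := hspos (j+1) (by omega)
    rw [ht]
    exact div_pos h2 (by linarith)
  -- expansion of t j * ‖Sv j‖²
  have Id1 : ∀ j, j < m → t j * ‖Sv j‖^2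
      = t j * ⟪D j, D j⟫ + ⟪D j, D (j+1)⟫ + (s j/(2*s (j+1))) * ⟪D (j+1), D (j+1)⟫ := by
    intro j hj
    have h1 : s j ≠ 0 := ne_of_gt (hspos j (by omega))
    have h2 : s (j+1) ≠ 0 := ne_of_gt (hspos (j+1) (by omega))
    have hexp : ‖Sv j‖^2 = ⟪D j, D j⟫ + 2*(s j/s (j+1))*⟪D j, D (j+1)⟫
        + (s j/s (j+1))^2 * ⟪D (j+1), D (j+1)⟫ := by
      rw [← real_inner_self_eq_norm_sq]
      simp only [hSv, inner_add_left, inner_add_right, real_inner_smul_left,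
        real_inner_smul_right, real_inner_comm (D (j+1)) (D j)]
      ring
    rw [hexp, ht]
    field_simp
  have hsum1 : ∑ j ∈ range m, t j * ‖Sv j‖^2
      = (∑ j ∈ range m, t j * ⟪D j, D j⟫) + (∑ j ∈ range m, ⟪D j, D (j+1)⟫)
        + ∑ j ∈ range m, (s j/(2*s (j+1))) * ⟪D (j+1), D (j+1)⟫ := by
    rw [← sum_add_distrib, ← sum_add_distrib]
    exact sum_congr rfl (fun j hj => Id1 j (mem_range.mp hj))
  have hmm : m - 1 + 1 = m := by omega
  have ht0 : t 0 = k + 1/2 := by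
    simp only [ht, zero_add, hs1]
    rw [div_eq_iff (ne_of_gt (by linarith : (0:ℝ) < 2*s 0))]
    ring
  have hQM : s (m-1) / (2*s (m-1+1)) = k + 1/2 := by
    rw [hmm, hsm1, hsm, hs1, div_eq_iff (ne_of_gt (by linarith : (0:ℝ) < 2*s 0))]
    ring
  have Hcoef : (∑ j ∈ range m, t j * ⟪D j, D j⟫)
      + (∑ j ∈ range m, (s j/(2*s (j+1))) * ⟪D (j+1), D (j+1)⟫)
      = k * (∑ i ∈ range (m+1), ⟪D i, D i⟫) + (1/2)*⟪D 0, D 0⟫ + (1/2)*⟪D m, D m⟫ := by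
    have happ := coef_sum (m-1) t (fun j => s j/(2*s (j+1))) (fun i => ⟪D i, D i⟫) k
      (by
        intro j hj
        have h2 : 0 < s (j+1) := hspos (j+1) (by omega)
        simp only [ht]
        rw [← add_div, div_eq_iff (ne_of_gt (by linarith : (0:ℝ) < 2*s (j+1)))]
        linarith [hrec j])
      ht0 hQM
    have h2 : m-1+2 = m+1 := by omega
    rw [hmm, h2] at happ
    exact happ
  -- representation of D 0 + D m as combination of Sv j
  have hrep : D 0 + D m = ∑ j ∈ range m, lam j • Sv j := by
    have hterm : ∀ j ∈ range m, lam j • Sv j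
        = (fun i => lam i • D i) j - (fun i => lam i • D i) (j+1) := by
      intro j hj
      have hj' := mem_range.mp hj
      have h1 : s j ≠ 0 := ne_of_gt (hspos j (by omega))
      have h2 : s (j+1) ≠ 0 := ne_of_gt (hspos (j+1) (by omega))
      simp only [hSv, hlam, smul_add, smul_smul]
      have hco : (-1:ℝ)^j * (s 0 / s j) * (s j / s (j+1)) = -((-1:ℝ)^(j+1) * (s 0 / s (j+1))) := by
        field_simp
        ring
      rw [hco, neg_smul, sub_eq_add_neg]
    rw [sum_congr rfl hterm, Finset.sum_range_sub' (fun i => lam i • D i) m]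
    have h0 : lam 0 = 1 := by
      simp only [hlam, pow_zero, one_mul]
      exact div_self (ne_of_gt hs0)
    have hmne : lam m = -1 := by
      have hodd : Odd m := ⟨N-1, by omega⟩
      simp only [hlam, hsm, div_self (ne_of_gt hs0), mul_one, hodd.neg_one_pow]
    rw [h0, hmne]
    simp
  -- sum of lam²/t equals 2
  have hB3 : ∑ j ∈ range m, (lam j)^2 / t j = 2 := by
    have hc0 : 0 < c 0 := by
      have := hsinθ
      rw [hsin2] at this
      nlinarith
    have hterm : ∀ j ∈ range m, (lam j)^2 / t j
        = (2*(s 0)^2/Real.sin θ) * ((fun i => c i / s i) j - (fun i => c i / s i) (j+1)) := by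
      intro j hj
      have hj' := mem_range.mp hj
      have h1 : 0 < s j := hspos j (by omega)
      have h2 : 0 < s (j+1) := hspos (j+1) (by omega)
      have hcs : c j * s (j+1) - c (j+1) * s j = Real.sin θ := by
        have hθeq : θ = A (j+1) - A j := by rw [hA1]; ring
        rw [hθeq, Real.sin_sub]
        simp only [hs, hc]
        ring
      have hsq : ((-1:ℝ)^j)^2 = 1 := by
        rw [← pow_mul, mul_comm, pow_mul]
        norm_num
      have h1' : s j ≠ 0 := ne_of_gt h1
      have h2' : s (j+1) ≠ 0 := ne_of_gt h2
      have hsθ' : Real.sin θ ≠ 0 := ne_of_gt hsinθ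
      have key : (fun i => c i / s i) j - (fun i => c i / s i) (j+1) = Real.sin θ / (s j * s (j+1)) := by
        simp only
        rw [div_sub_div _ _ h1' h2',
          show c j * s (j+1) - s j * c (j+1) = Real.sin θ by linarith [hcs]]
      rw [key]
      simp only [hlam, ht, mul_pow, hsq, one_mul, div_pow]
      field_simp
    rw [sum_congr rfl hterm, ← mul_sum, Finset.sum_range_sub' (fun i => c i / s i) m,
      hcm, hsm]
    rw [hsin2]
    have hc0 : 0 < c 0 := by nlinarith [hsinθ, hsin2]
    field_simp
    ring
  -- Cauchy–Schwarz
  have hCS : ‖D 0 + D m‖^2 ≤ 2 * ∑ j ∈ range m, t j * ‖Sv j‖^2 := by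
    have h1 : ‖D 0 + D m‖ ≤ ∑ j ∈ range m, |lam j| * ‖Sv j‖ := by
      rw [hrep]
      refine (norm_sum_le _ _).trans_eq ?_
      exact sum_congr rfl fun j _ => by rw [norm_smul, Real.norm_eq_abs]
    have h2 : (∑ j ∈ range m, |lam j| * ‖Sv j‖)^2
        ≤ (∑ j ∈ range m, (lam j)^2 / t j) * ∑ j ∈ range m, t j * ‖Sv j‖^2 := by
      have hcs2 := Finset.sum_mul_sq_le_sq_mul_sq (range m)
        (fun j => |lam j| / Real.sqrt (t j)) (fun j => Real.sqrt (t j) * ‖Sv j‖)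
      have e1 : ∀ j ∈ range m, |lam j| / Real.sqrt (t j) * (Real.sqrt (t j) * ‖Sv j‖) = |lam j| * ‖Sv j‖ := by
        intro j hj
        have htj := htpos j (mem_range.mp hj)
        have hne : Real.sqrt (t j) ≠ 0 := ne_of_gt (Real.sqrt_pos.mpr htj)
        field_simp
      have e2 : ∀ j ∈ range m, (|lam j| / Real.sqrt (t j))^2 = (lam j)^2 / t j := by
        intro j hj
        have htj := htpos j (mem_range.mp hj)
        rw [div_pow, sq_abs, Real.sq_sqrt htj.le]
      have e3 : ∀ j ∈ range m, (Real.sqrt (t j) * ‖Sv j‖)^2 = t j * ‖Sv j‖^2 := by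
        intro j hj
        have htj := htpos j (mem_range.mp hj)
        rw [mul_pow, Real.sq_sqrt htj.le]
      rw [sum_congr rfl e1, sum_congr rfl e2, sum_congr rfl e3] at hcs2
      exact hcs2
    calc ‖D 0 + D m‖^2 ≤ (∑ j ∈ range m, |lam j| * ‖Sv j‖)^2 :=
          pow_le_pow_left₀ (norm_nonneg _) h1 2
      _ ≤ _ := h2
      _ = 2 * ∑ j ∈ range m, t j * ‖Sv j‖^2 := by rw [hB3]
  -- assembly
  have hnorm : ‖D 0 + D m‖^2 = ⟪D 0, D 0⟫ + 2*⟪D 0, D m⟫ + ⟪D m, D m⟫ := by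
    rw [← real_inner_self_eq_norm_sq]
    simp only [inner_add_left, inner_add_right, real_inner_comm (D m) (D 0)]
    ring
  have hcomm : ⟪D m, D 0⟫ = ⟪D 0, D m⟫ := real_inner_comm _ _
  rw [← hm1]
  linarith [hCS, hsum1, Hcoef, hnorm, hcomm]

lemma cs_sum_norm (m : ℕ) (v : ℕ → H) :
    ‖∑ i ∈ range m, v i‖^2 ≤ m * ∑ i ∈ range m, ‖v i‖^2 := by
  have h1 : ‖∑ i ∈ range m, v i‖ ≤ ∑ i ∈ range m, ‖v i‖ := norm_sum_le _ _
  have h2 : (∑ i ∈ range m, ‖v i‖)^2 ≤ (∑ i ∈ range m, (1:ℝ)^2) * ∑ i ∈ range m, ‖v i‖^2 := by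
    simpa using Finset.sum_mul_sq_le_sq_mul_sq (range m) 1 (fun i => ‖v i‖)
  calc ‖∑ i ∈ range m, v i‖^2 ≤ (∑ i ∈ range m, ‖v i‖)^2 :=
        pow_le_pow_left₀ (norm_nonneg _) h1 2
    _ ≤ (∑ i ∈ range m, (1:ℝ)^2) * ∑ i ∈ range m, ‖v i‖^2 := h2
    _ = m * ∑ i ∈ range m, ‖v i‖^2 := by simp

lemma shift_sum {M : Type*} [AddCommGroup M] (m : ℕ) (v : ℕ → M) (h : v m = v 0) :
    ∑ i ∈ range m, v (i+1) = ∑ i ∈ range m, v i := by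
  have h1 := Finset.sum_range_succ v m
  have h2 := Finset.sum_range_succ' v m
  rw [h] at h1
  exact add_right_cancel (h2.symm.trans h1)

lemma wpart (m : ℕ) (hm : 0 < m) (W : ℕ → H) (hWper : W m = W 0) :
    2 * ‖∑ i ∈ range m, W i‖^2 / m
      ≤ (∑ i ∈ range m, ⟪W i, W i⟫) + ∑ i ∈ range m, ⟪W i, W (i+1)⟫ := by
  have hmR : (0:ℝ) < (m:ℝ) := by exact_mod_cast hm
  set U : ℕ → H := fun i => W i + W (i+1) with hU
  have hUsum : ∑ i ∈ range m, U i = (2:ℝ) • ∑ i ∈ range m, W i := by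
    simp only [hU]
    rw [sum_add_distrib, shift_sum m W hWper, two_smul]
  have hUU : ∀ i, ⟪U i, U i⟫ = ⟪W i, W i⟫ + ⟪W (i+1), W (i+1)⟫ + 2*⟪W i, W (i+1)⟫ := by
    intro i
    simp only [hU, inner_add_left, inner_add_right, real_inner_comm (W (i+1)) (W i)]
    ring
  have hWW2 : ∑ i ∈ range m, ⟪W (i+1), W (i+1)⟫ = ∑ i ∈ range m, ⟪W i, W i⟫ :=
    shift_sum m (fun i => ⟪W i, W i⟫) (by show (⟪W m, W m⟫:ℝ) = ⟪W 0, W 0⟫; rw [hWper])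
  have hsumUU : ∑ i ∈ range m, ⟪U i, U i⟫
      = 2 * (∑ i ∈ range m, ⟪W i, W i⟫) + 2 * ∑ i ∈ range m, ⟪W i, W (i+1)⟫ := by
    rw [sum_congr rfl (fun i _ => hUU i), sum_add_distrib, sum_add_distrib, hWW2, ← mul_sum]
    ring
  have hcs := cs_sum_norm m U
  have hnormU : ∀ i, ‖U i‖^2 = ⟪U i, U i⟫ := fun i => (real_inner_self_eq_norm_sq (U i)).symm
  rw [sum_congr rfl (fun i _ => hnormU i), hsumUU, hUsum] at hcs
  rw [norm_smul] at hcs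
  simp only [Real.norm_ofNat] at hcs
  rw [mul_pow] at hcs
  rw [div_le_iff₀ hmR]
  nlinarith [hcs]

set_option maxHeartbeats 1600000 in
lemma key (N : ℕ) (hN : 2 ≤ N) (g0 : H) (g : ℕ → H)
    (hper : ∀ i, g (i + 4*N) = g i)
    (hg0 : ⟪g0, g0⟫ = 1)
    (hd : ∀ i, ⟪g0, g i⟫ = ⟪g i, g i⟫)
    (he1 : ∀ i, ⟪g i, g (i+1)⟫ = 0)
    (he2 : ∀ i, ⟪g i, g (i + 2*N)⟫ = 0) :
    ∑ i ∈ range (4*N), ⟪g i, g i⟫ ≤ (N:ℝ) * (1 + Real.cos (π / (2*N))) := by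
  have hNR : (0:ℝ) < (N:ℝ) := by exact_mod_cast (by omega : 0 < N)
  set k : ℝ := Real.cos (π / (2*N)) with hk
  have hkpos : 0 < k := by
    rw [hk]
    apply Real.cos_pos_of_mem_Ioo
    constructor
    · have : (0:ℝ) < π/(2*N) := by positivity
      linarith [Real.pi_pos]
    · calc π/(2*(N:ℝ)) < π/2 := by
            apply div_lt_div_of_pos_left Real.pi_pos (by norm_num)
            have : (2:ℝ) ≤ (N:ℝ) := by exact_mod_cast hN
            linarith
        _ ≤ π/2 := le_refl _
  set W : ℕ → H := fun i => g i + g (i + 2*N) with hW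
  set D : ℕ → H := fun i => g i - g (i + 2*N) with hD
  set S : ℝ := ∑ i ∈ range (4*N), ⟪g i, g i⟫ with hS
  set T : H := ∑ i ∈ range (4*N), g i with hT
  -- sum splitting helpers
  have hsplitR : ∀ F : ℕ → ℝ, ∑ i ∈ range (4*N), F i
      = (∑ i ∈ range (2*N), F i) + ∑ i ∈ range (2*N), F (i + 2*N) := by
    intro F
    rw [show 4*N = 2*N + 2*N by ring, Finset.sum_range_add]
    congr 1
    exact sum_congr rfl fun i _ => by rw [add_comm]
  have hsplitH : ∑ i ∈ range (4*N), g i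
      = (∑ i ∈ range (2*N), g i) + ∑ i ∈ range (2*N), g (i + 2*N) := by
    rw [show 4*N = 2*N + 2*N by ring, Finset.sum_range_add]
    congr 1
    exact sum_congr rfl fun i _ => by rw [add_comm]
  have hWW : ∑ i ∈ range (2*N), ⟪W i, W i⟫ = S := by
    have : ∀ i, ⟪W i, W i⟫ = ⟪g i, g i⟫ + ⟪g (i+2*N), g (i+2*N)⟫ := by
      intro i
      simp only [hW, inner_add_left, inner_add_right]
      linarith [he2 i, real_inner_comm (g i) (g (i + 2*N))]
    rw [sum_congr rfl fun i _ => this i, sum_add_distrib, hS, hsplitR (fun i => ⟪g i, g i⟫)]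
  have hDD : ∑ i ∈ range (2*N), ⟪D i, D i⟫ = S := by
    have : ∀ i, ⟪D i, D i⟫ = ⟪g i, g i⟫ + ⟪g (i+2*N), g (i+2*N)⟫ := by
      intro i
      simp only [hD, inner_sub_left, inner_sub_right]
      linarith [he2 i, real_inner_comm (g i) (g (i + 2*N))]
    rw [sum_congr rfl fun i _ => this i, sum_add_distrib, hS, hsplitR (fun i => ⟪g i, g i⟫)]
  have hTW : T = ∑ i ∈ range (2*N), W i := by
    rw [hT, hsplitH, ← sum_add_distrib]
  have hWper : W (2*N) = W 0 := by
    simp only [hW]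
    rw [show 2*N + 2*N = 0 + 4*N by ring, hper 0, zero_add, add_comm]
  have hDanti : D (2*N) = -(D 0) := by
    simp only [hD]
    rw [show 2*N + 2*N = 0 + 4*N by ring, hper 0, zero_add]
    abel
  have hcancel : ∀ i, ⟪W i, W (i+1)⟫ + ⟪D i, D (i+1)⟫ = 0 := by
    intro i
    have h1 := he1 i
    have h2 := he1 (i + 2*N)
    simp only [hW, hD, inner_add_left, inner_add_right, inner_sub_left, inner_sub_right]
    rw [show i+1+2*N = (i+2*N)+1 by ring]
    linarith
  have hcancelsum : ∑ i ∈ range (2*N), ⟪W i, W (i+1)⟫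
      = - ∑ i ∈ range (2*N), ⟪D i, D (i+1)⟫ := by
    have h : ∀ i ∈ range (2*N), (⟪W i, W (i+1)⟫:ℝ) = - ⟪D i, D (i+1)⟫ :=
      fun i _ => by linarith [hcancel i]
    rw [sum_congr rfl h, ← Finset.sum_neg_distrib]
  -- w-part bound
  have hwp := wpart (2*N) (by omega) W hWper
  rw [← hTW, hWW] at hwp
  -- d-part bound
  have hdp := dpart N hN D
  rw [hDD] at hdp
  have hDsum : ∑ i ∈ range (2*N), ⟪D i, D (i+1)⟫
      = (∑ j ∈ range (2*N-1), ⟪D j, D (j+1)⟫) - ⟪D (2*N-1), D 0⟫ := by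
    rw [show 2*N = (2*N-1)+1 by omega,
      Finset.sum_range_succ (fun i => (⟪D i, D (i+1)⟫:ℝ)) (2*N-1)]
    rw [show 2*N-1+1 = 2*N by omega, hDanti, inner_neg_right]
    ring
  have hdp2 : 0 ≤ k * S + ∑ i ∈ range (2*N), ⟪D i, D (i+1)⟫ := by
    rw [hDsum]; linarith [hdp]
  have hWbound : ∑ i ∈ range (2*N), ⟪W i, W (i+1)⟫ ≤ k * S := by
    rw [hcancelsum]; linarith [hdp2]
  have hTbound : ‖T‖^2 ≤ (N:ℝ)*(1+k)*S := by
    have h2N : (0:ℝ) < 2*(N:ℝ) := by linarith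
    have hcast : ((2*N : ℕ):ℝ) = 2*(N:ℝ) := by push_cast; ring
    rw [hcast, div_le_iff₀ h2N] at hwp
    nlinarith [hwp, hWbound]
  -- arrow step
  set a : ℝ := (N:ℝ)*(1+k) with ha
  have hapos : 0 < a := by rw [ha]; nlinarith [hkpos, hNR]
  have hg0T : ⟪g0, T⟫ = S := by
    rw [hT, inner_sum, hS]
    exact sum_congr rfl fun i _ => hd i
  have harrow : 0 ≤ a^2 - 2*a*S + ‖T‖^2 := by
    have hexp : ‖a • g0 - T‖^2 = a^2*⟪g0,g0⟫ - 2*a*⟪g0,T⟫ + ‖T‖^2 := by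
      rw [← real_inner_self_eq_norm_sq, ← real_inner_self_eq_norm_sq]
      simp only [inner_sub_left, inner_sub_right, real_inner_smul_left, real_inner_smul_right,
        real_inner_comm T g0]
      ring
    rw [hg0, hg0T] at hexp
    nlinarith [sq_nonneg ‖a • g0 - T‖, hexp]
  have hfin : S ≤ a := by nlinarith [hTbound, harrow, hapos]
  rw [ha] at hfin
  exact hfin

/-- Any feasible solution of the Lovász theta SDP for the Möbius ladder graph
`Ci_{4N}(1, 2N)` has value at most `N (1 + cos(π/(2N)))`. -/
theorem theta_SDP_mobius_upper_bound (N : ℕ) (hN : 2 ≤ N)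
    (X : Matrix (Fin 1 ⊕ Fin (4 * N)) (Fin 1 ⊕ Fin (4 * N)) ℝ)
    (hX : X.PosSemidef)
    (h00 : X (Sum.inl 0) (Sum.inl 0) = 1)
    (hdiag : ∀ i, X (Sum.inr i) (Sum.inr i) = X (Sum.inl 0) (Sum.inr i))
    (hadj : ∀ i j : Fin (4 * N),
      ((i.val + 1) % (4 * N) = j.val ∨ (j.val + 1) % (4 * N) = i.val ∨
        (i.val + 2 * N) % (4 * N) = j.val) →
      X (Sum.inr i) (Sum.inr j) = 0) :
    ∑ i, X (Sum.inr i) (Sum.inr i) ≤ (N : ℝ) * (1 + Real.cos (Real.pi / (2 * N))) := by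
  have h4 : 0 < 4*N := by omega
  obtain ⟨B, hB⟩ : ∃ B : Matrix (Fin 1 ⊕ Fin (4*N)) (Fin 1 ⊕ Fin (4*N)) ℝ, X = Matrix.conjTranspose B * B := by
    open scoped MatrixOrder in exact CStarAlgebra.nonneg_iff_eq_star_mul_self.mp hX.nonneg
  let G : (Fin 1 ⊕ Fin (4*N)) → EuclideanSpace ℝ (Fin 1 ⊕ Fin (4*N)) := fun a => WithLp.toLp 2 (fun r => B r a)
  have hinner : ∀ a b, (⟪G a, G b⟫ : ℝ) = X a b := by
    intro a b
    rw [hB]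
    simp [G, PiLp.inner_apply, RCLike.inner_apply, conj_trivial,
      Matrix.mul_apply, Matrix.conjTranspose_apply, mul_comm]
  let g : ℕ → EuclideanSpace ℝ (Fin 1 ⊕ Fin (4*N)) :=
    fun i => G (Sum.inr ⟨i % (4*N), Nat.mod_lt i h4⟩)
  have hper : ∀ i, g (i + 4*N) = g i := fun i =>
    congrArg G (congrArg Sum.inr (Fin.ext (Nat.add_mod_right i (4*N))))
  have hg0 : (⟪G (Sum.inl 0), G (Sum.inl 0)⟫ : ℝ) = 1 := by rw [hinner]; exact h00
  have hd : ∀ i, (⟪G (Sum.inl 0), g i⟫ : ℝ) = ⟪g i, g i⟫ := by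
    intro i
    simp only [g]
    rw [hinner, hinner]
    exact (hdiag _).symm
  have he1 : ∀ i, (⟪g i, g (i+1)⟫ : ℝ) = 0 := by
    intro i
    simp only [g]
    rw [hinner]
    apply hadj
    left
    show (i % (4*N) + 1) % (4*N) = (i+1) % (4*N)
    rw [Nat.add_mod i 1 (4*N), Nat.mod_eq_of_lt (by omega : 1 < 4*N)]
  have he2 : ∀ i, (⟪g i, g (i + 2*N)⟫ : ℝ) = 0 := by
    intro i
    simp only [g]
    rw [hinner]
    apply hadj
    right; right
    show (i % (4*N) + 2*N) % (4*N) = (i + 2*N) % (4*N)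
    rw [Nat.add_mod i (2*N) (4*N), Nat.mod_eq_of_lt (by omega : 2*N < 4*N)]
  have hkey := key N hN (G (Sum.inl 0)) g hper hg0 hd he1 he2
  have hsum : ∑ i ∈ range (4*N), (⟪g i, g i⟫ : ℝ) = ∑ i, X (Sum.inr i) (Sum.inr i) := by
    rw [← Fin.sum_univ_eq_sum_range (fun i => (⟪g i, g i⟫ : ℝ)) (4*N)]
    refine sum_congr rfl fun i _ => ?_
    simp only [g]
    rw [hinner]
    congr 2 <;> exact Fin.ext (Nat.mod_eq_of_lt i.isLt)
  rw [hsum] at hkey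
  exact hkey
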